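/- Let G be a finitely generated pro-p group such that for some closed normal subgroup Z ≅ Z_p with G/Z torsion-free, Z ⊄ Φ(C) holds for every open subgroup C ≤ G containing a finite-index subgroup of Z as C ∩ Z. Then the extension 1 → Z → G → G/Z → 1 splits: there exists a closed subgroup H ≤ G with H ∩ Z = 1 and HZ = G. -/

import Mathlib

set_option maxHeartbeats 1000000

open scoped commutatorElement

/-- The Frattini subgroup `Φ(C) = C^p·[C,C]` (closed subgroup topologically
generated by `p`-th powers and commutators of `C`), as a subgroup of the ambient
group. -/
def phiSub (p : ℕ) {G : Type*} [Group G] [TopologicalSpace G] [IsTopologicalGroup G]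
    (C : Subgroup G) : Subgroup G :=
  (Subgroup.closure {w : G |
      (∃ c ∈ C, w = c ^ p) ∨ ∃ a ∈ C, ∃ b ∈ C, w = ⁅a, b⁆}).topologicalClosure

/-- Recursive choice of a sequence. -/
lemma existsSeqAux {α : Type*} (P : α → Prop) (R : α → α → Prop) (a₀ : α) (h₀ : P a₀)
    (hstep : ∀ a, P a → ∃ b, P b ∧ R a b) :
    ∃ f : ℕ → α, f 0 = a₀ ∧ (∀ n, P (f n)) ∧ ∀ n, R (f n) (f (n + 1)) := by
  let g : {a // P a} → {a // P a} := fun a => ⟨(hstep a.1 a.2).choose, (hstep a.1 a.2).choose_spec.1⟩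
  let F : ℕ → {a // P a} := fun n => g^[n] ⟨a₀, h₀⟩
  refine ⟨fun n => (F n).1, rfl, fun n => (F n).2, fun n => ?_⟩
  have h : F (n + 1) = g (F n) := Function.iterate_succ_apply' g n _
  have h2 : ((F (n+1)) : {a // P a}).1 = (g (F n)).1 := by rw [h]
  simpa [h2] using (hstep (F n).1 (F n).2).choose_spec.2

/-- A strictly decreasing sequence of closed additive subgroups of `ℤ_[p]` has
trivial intersection. -/
lemma padicChainAux {p : ℕ} [hp : Fact p.Prime] (A : ℕ → AddSubgroup ℤ_[p])
    (hcl : ∀ m, IsClosed (A m : Set ℤ_[p])) (_hdec : ∀ m, A (m + 1) ≤ A m)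
    (hstr : ∀ m, ∃ y, y ∈ A m ∧ y ∉ A (m + 1)) {x : ℤ_[p]} (hx : ∀ m, x ∈ A m) :
    x = 0 := by
  have hsmul : ∀ m (r a : ℤ_[p]), a ∈ A m → r * a ∈ A m := by
    intro m r a ha
    have hsub : Set.range (Int.cast : ℤ → ℤ_[p]) ⊆ {r : ℤ_[p] | r * a ∈ A m} := by
      rintro _ ⟨n, rfl⟩
      simpa [zsmul_eq_mul] using zsmul_mem ha n
    have hcls : IsClosed {r : ℤ_[p] | r * a ∈ A m} :=
      (hcl m).preimage (continuous_id.mul continuous_const)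
    have hsub2 : closure (Set.range (Int.cast : ℤ → ℤ_[p])) ⊆ {r : ℤ_[p] | r * a ∈ A m} :=
      hcls.closure_subset_iff.2 hsub
    exact hsub2 (by rw [(PadicInt.denseRange_intCast (p := p)).closure_range]; trivial)
  let I : ℕ → Ideal ℤ_[p] := fun m =>
    { carrier := (A m : Set ℤ_[p])
      add_mem' := fun h h' => add_mem h h'
      zero_mem' := zero_mem _
      smul_mem' := fun r y hy => by simpa [smul_eq_mul] using hsmul m r y hy }
  by_contra hx0
  have hne : ∀ m, I m ≠ ⊥ := by
    intro m h
    apply hx0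
    have hmem : x ∈ I m := hx m
    rwa [h, Ideal.mem_bot] at hmem
  choose n hn using fun m => PadicInt.ideal_eq_span_pow_p (hne m)
  have hlt : ∀ m, n m < n (m + 1) := by
    intro m
    by_contra hle
    push_neg at hle
    obtain ⟨y, hy, hy'⟩ := hstr m
    apply hy'
    have hIle : I m ≤ I (m + 1) := by
      rw [hn m, hn (m + 1)]
      exact Ideal.span_singleton_le_span_singleton.2 (pow_dvd_pow _ hle)
    exact hIle hy
  have hmge : ∀ m, m ≤ n m := by
    intro m
    induction m with
    | zero => exact Nat.zero_le _
    | succ k ih => exact Nat.succ_le_of_lt (lt_of_le_of_lt ih (hlt k))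
  have hp1 : (1 : ℝ) < (p : ℝ) := by exact_mod_cast hp.out.one_lt
  have hnorm : ∀ m : ℕ, ‖x‖ ≤ (p : ℝ) ^ (-(m : ℤ)) := by
    intro m
    have h1 : x ∈ Ideal.span {(p : ℤ_[p]) ^ (n m)} := by rw [← hn m]; exact hx m
    have h2 : ‖x‖ ≤ (p : ℝ) ^ (-(n m : ℤ)) :=
      (PadicInt.norm_le_pow_iff_mem_span_pow x (n m)).2 h1
    refine h2.trans ?_
    apply zpow_le_zpow_right₀ hp1.le
    exact neg_le_neg (by exact_mod_cast hmge m)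
  have htend : Filter.Tendsto (fun m : ℕ => (p : ℝ) ^ (-(m : ℤ))) Filter.atTop (nhds 0) := by
    have heq : (fun m : ℕ => (p : ℝ) ^ (-(m : ℤ))) = fun m : ℕ => ((p : ℝ)⁻¹) ^ m := by
      funext m
      rw [zpow_neg, zpow_natCast, inv_pow]
    rw [heq]
    exact tendsto_pow_atTop_nhds_zero_of_lt_one (by positivity) (by
      rw [inv_lt_one_iff₀]; right; exact hp1)
  have h0 : ‖x‖ ≤ 0 := ge_of_tendsto htend (Filter.Eventually.of_forall hnorm)
  exact hx0 (norm_le_zero_iff.1 h0)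

/-- The key step: if `z ∈ C` is not in the Frattini subgroup of the open subgroup `C`,
then there is an open subgroup of index `p` in `C` avoiding `z`. -/
lemma stepAux {p : ℕ} [hp : Fact p.Prime] {G : Type*} [Group G] [TopologicalSpace G]
    [IsTopologicalGroup G] [CompactSpace G] [T2Space G] [TotallyDisconnectedSpace G]
    (C : Subgroup G) (_hC : IsOpen (C : Set G)) {z : G} (hzC : z ∈ C)
    (hz : z ∉ phiSub p C) :
    ∃ D : Subgroup G, D ≤ C ∧ IsOpen (D : Set G) ∧ z ∉ D ∧ D.relIndex C = p := by
  set S : Set G := {w : G | (∃ c ∈ C, w = c ^ p) ∨ ∃ a ∈ C, ∃ b ∈ C, w = ⁅a, b⁆} with hS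
  set Φa : Subgroup G := Subgroup.closure S with hΦa
  have hSC : S ⊆ (C : Set G) := by
    rintro w (⟨c, hc, rfl⟩ | ⟨a, ha, b, hb, rfl⟩)
    · exact pow_mem hc p
    · rw [commutatorElement_def]
      exact mul_mem (mul_mem (mul_mem ha hb) (inv_mem ha)) (inv_mem hb)
  have hΦaC : Φa ≤ C := (Subgroup.closure_le C).2 hSC
  have hzcl : z ∉ closure (Φa : Set G) := hz
  -- find an open normal subgroup U with z ∉ Φa * U
  have h1V : (1 : G) ∈ (fun v => z * v) ⁻¹' (closure (Φa : Set G))ᶜ := by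
    simpa using hzcl
  obtain ⟨K, hKclopen, h1K, hKV⟩ := compact_exists_isClopen_in_isOpen
    (isClosed_closure.isOpen_compl.preimage (continuous_mul_left z)) h1V
  obtain ⟨U, hU⟩ :=
    IsTopologicalGroup.exist_openNormalSubgroup_sub_clopen_nhds_of_one hKclopen h1K
  have hzΦU : z ∉ Φa ⊔ U.toSubgroup := by
    intro hmem
    have hmem' : z ∈ (↑(Φa ⊔ U.toSubgroup) : Set G) := hmem
    rw [Subgroup.mul_normal] at hmem'
    obtain ⟨a, ha, u, hu, rfl⟩ := hmem'
    have huinv : u⁻¹ ∈ (U : Set G) := inv_mem hu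
    have := hKV (hU huinv)
    simp only [Set.mem_preimage, Set.mem_compl_iff, mul_inv_cancel_right] at this
    exact this (subset_closure ha)
  set π := QuotientGroup.mk' U.toSubgroup with hπ
  haveI : Finite (G ⧸ U.toSubgroup) := U.toSubgroup.quotient_finite_of_isOpen U.isOpen
  set Cb := C.map π with hCb
  set Φb := Φa.map π with hΦb
  have hΦbCb : Φb ≤ Cb := Subgroup.map_mono hΦaC
  have hzCb : π z ∈ Cb := Subgroup.mem_map_of_mem π hzC
  have hker : π.ker = U.toSubgroup := QuotientGroup.ker_mk' _
  have hzΦb : π z ∉ Φb := by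
    intro hmem
    have h2 : z ∈ Subgroup.comap π Φb := hmem
    rw [hΦb, Subgroup.comap_map_eq, hker] at h2
    exact hzΦU h2
  -- a maximal subgroup between Φb and Cb avoiding π z
  haveI : Finite (Subgroup (G ⧸ U.toSubgroup)) :=
    Finite.of_injective _ (SetLike.coe_injective (A := Subgroup (G ⧸ U.toSubgroup)))
  set s : Set (Subgroup (G ⧸ U.toSubgroup)) := {E | Φb ≤ E ∧ E ≤ Cb ∧ π z ∉ E} with hs
  have hsne : Φb ∈ s := ⟨le_rfl, hΦbCb, hzΦb⟩
  obtain ⟨M, hMs, hMmax⟩ := Set.Finite.exists_maximalFor id s (Set.toFinite s) ⟨Φb, hsne⟩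
  obtain ⟨hΦbM, hMCb, hzM⟩ := hMs
  have key : ∀ c : G ⧸ U.toSubgroup, c ∈ Cb → c ∉ M → π z ∈ M ⊔ Subgroup.zpowers c := by
    intro c hcCb hcM
    by_contra hzE
    have hEs : M ⊔ Subgroup.zpowers c ∈ s :=
      ⟨le_trans hΦbM le_sup_left, sup_le hMCb (Subgroup.zpowers_le.2 hcCb), hzE⟩
    have heq : M = M ⊔ Subgroup.zpowers c := le_antisymm le_sup_left (hMmax hEs le_sup_left)
    exact hcM (by
      have h2 : c ∈ M ⊔ Subgroup.zpowers c := Subgroup.mem_sup_right (Subgroup.mem_zpowers c)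
      rwa [← heq] at h2)
  have hcomm : ∀ a b : G ⧸ U.toSubgroup, a ∈ Cb → b ∈ Cb → ⁅a, b⁆ ∈ Φb := by
    intro a b ha hb
    obtain ⟨a₀, ha₀, rfl⟩ := ha
    obtain ⟨b₀, hb₀, rfl⟩ := hb
    rw [← map_commutatorElement]
    exact Subgroup.mem_map_of_mem π (Subgroup.subset_closure (Or.inr ⟨a₀, ha₀, b₀, hb₀, rfl⟩))
  have hpowm : ∀ a : G ⧸ U.toSubgroup, a ∈ Cb → a ^ p ∈ Φb := by
    intro a ha
    obtain ⟨a₀, ha₀, rfl⟩ := ha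
    rw [← map_pow]
    exact Subgroup.mem_map_of_mem π (Subgroup.subset_closure (Or.inl ⟨a₀, ha₀, rfl⟩))
  set M' := M.subgroupOf Cb with hM'
  haveI : M'.Normal := by
    constructor
    intro nn hn g
    rw [hM', Subgroup.mem_subgroupOf] at hn ⊢
    have hco : (↑(g * nn * g⁻¹) : G ⧸ U.toSubgroup) = ⁅(g : G ⧸ U.toSubgroup), (nn : G ⧸ U.toSubgroup)⁆ * (nn : G ⧸ U.toSubgroup) := by
      push_cast
      group
    rw [hco]
    exact mul_mem (hΦbM (hcomm _ _ g.2 (hMCb hn))) hn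
  set f := QuotientGroup.mk' M' with hf
  have hker' : ∀ x : Cb, f x = 1 ↔ (x : G ⧸ U.toSubgroup) ∈ M := by
    intro x
    rw [hf, QuotientGroup.mk'_apply, QuotientGroup.eq_one_iff, hM', Subgroup.mem_subgroupOf]
  have hfpow : ∀ x : Cb, (f x) ^ p = 1 := by
    intro x
    rw [← map_pow, hker']
    have : ((x ^ p : Cb) : G ⧸ U.toSubgroup) = (x : G ⧸ U.toSubgroup) ^ p := rfl
    rw [this]
    exact hΦbM (hpowm _ x.2)
  set ζ := f ⟨π z, hzCb⟩ with hζ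
  have hζ1 : ζ ≠ 1 := fun h => hzM ((hker' _).1 h)
  have horder : orderOf ζ = p := orderOf_eq_prime (hfpow _) hζ1
  have hgen : ∀ q : Cb ⧸ M', q ∈ Subgroup.zpowers ζ := by
    intro q
    obtain ⟨c, rfl⟩ := QuotientGroup.mk'_surjective M' q
    by_cases hcM : (c : G ⧸ U.toSubgroup) ∈ M
    · have h1 : f c = 1 := (hker' c).2 hcM
      rw [show (QuotientGroup.mk' M') c = f c from rfl, h1]
      exact one_mem _
    · have hzsup := key _ c.2 hcM
      set T := (Subgroup.comap f (Subgroup.zpowers (f c))).map Cb.subtype with hT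
      have hMT : M ≤ T := by
        intro m hm
        refine Subgroup.mem_map.2 ⟨⟨m, hMCb hm⟩, ?_, rfl⟩
        rw [Subgroup.mem_comap, (hker' ⟨m, hMCb hm⟩).2 hm]
        exact one_mem _
      have hcT : Subgroup.zpowers (c : G ⧸ U.toSubgroup) ≤ T :=
        Subgroup.zpowers_le.2
          (Subgroup.mem_map.2 ⟨c, Subgroup.mem_comap.2 (Subgroup.mem_zpowers _), rfl⟩)
      have hzT : π z ∈ T := (sup_le hMT hcT) hzsup
      obtain ⟨w, hw, hwz⟩ := Subgroup.mem_map.1 hzT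
      have hwize : w = ⟨π z, hzCb⟩ := Subtype.ext hwz
      rw [hwize] at hw
      have hζmem : ζ ∈ Subgroup.zpowers (f c) := Subgroup.mem_comap.1 hw
      obtain ⟨k, hk⟩ := hζmem
      have hk' : (f c) ^ k = ζ := hk
      have hfcp : (f c) ^ (p : ℤ) = 1 := by
        rw [zpow_natCast]
        exact hfpow c
      have hpk : ¬ ((p : ℤ) ∣ k) := by
        intro ⟨t, ht⟩
        apply hζ1
        rw [← hk', ht, zpow_mul, hfcp, one_zpow]
      have hcop : IsCoprime (p : ℤ) k :=
        (Nat.prime_iff_prime_int.1 hp.out).coprime_iff_not_dvd.2 hpk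
      obtain ⟨u, v, huv⟩ := hcop
      refine ⟨v, ?_⟩
      have h1 : ((f c) ^ ((p : ℤ))) ^ u * ((f c) ^ k) ^ v = f c := by
        rw [← zpow_mul, ← zpow_mul, ← zpow_add,
          show (p : ℤ) * u + k * v = 1 by linarith [huv], zpow_one]
      rw [← h1, hfcp, one_zpow, hk', one_mul]
  have htop' : Subgroup.zpowers ζ = ⊤ := le_antisymm le_top (fun q _ => hgen q)
  have hcardQ : Nat.card (Cb ⧸ M') = p := by
    calc Nat.card (Cb ⧸ M') = Nat.card (⊤ : Subgroup (Cb ⧸ M')) := by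
          rw [Subgroup.card_top]
      _ = Nat.card (Subgroup.zpowers ζ) := by rw [htop']
      _ = orderOf ζ := Nat.card_zpowers ζ
      _ = p := horder
  have hrelMCb : M.relIndex Cb = p := by
    have h1 : M.relIndex Cb = M'.index := rfl
    rw [h1, Subgroup.index_eq_card]
    exact hcardQ
  refine ⟨Subgroup.comap π M ⊓ C, inf_le_right, ?_, ?_, ?_⟩
  · apply Subgroup.isOpen_mono (H₁ := U.toSubgroup ⊓ C)
    · intro u hu
      rw [Subgroup.mem_inf] at hu ⊢
      refine ⟨?_, hu.2⟩
      rw [Subgroup.mem_comap]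
      have hone : π u = 1 := by
        rw [hπ, QuotientGroup.mk'_apply]
        exact (QuotientGroup.eq_one_iff u).2 hu.1
      rw [hone]
      exact one_mem M
    · have hcoe : ((U.toSubgroup ⊓ C : Subgroup G) : Set G) = (U : Set G) ∩ (C : Set G) := rfl
      rw [hcoe]
      exact U.isOpen.inter _hC
  · intro hmem
    rw [Subgroup.mem_inf] at hmem
    exact hzM (Subgroup.mem_comap.1 hmem.1)
  · rw [Subgroup.inf_relIndex_right, Subgroup.relIndex_comap]
    exact hrelMCb

theorem stmt_16 (p : ℕ) [Fact p.Prime] {G : Type*} [Group G] [TopologicalSpace G]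
    [IsTopologicalGroup G] [CompactSpace G] [T2Space G] [TotallyDisconnectedSpace G]
    (hfg : ∃ S : Finset G, Dense ((Subgroup.closure (S : Set G) : Subgroup G) : Set G))
    (Z : Subgroup G) [Z.Normal] (hZcl : IsClosed (Z : Set G))
    (hZiso : ∃ e : Z ≃* Multiplicative ℤ_[p], Continuous e)
    (htf : ∀ x : G ⧸ Z, ∀ n : ℕ, 0 < n → x ^ n = 1 → x = 1)
    (hΦ : ∀ C : Subgroup G, IsOpen (C : Set G) → (C ⊓ Z).relIndex Z ≠ 0 →
      ¬ (C ⊓ Z ≤ phiSub p C)) :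
    ∃ H : Subgroup G, IsClosed (H : Set G) ∧ H ⊓ Z = ⊥ ∧
      ∀ g : G, ∃ h ∈ H, ∃ z ∈ Z, g = h * z := by
  classical
  obtain ⟨e, he⟩ := hZiso
  clear hfg htf
  haveI hp : Fact p.Prime := ‹_›
  -- the invariant
  set P : Subgroup G → Prop := fun C =>
    IsOpen (C : Set G) ∧ C ⊔ Z = ⊤ ∧ (C ⊓ Z).relIndex Z ≠ 0 with hP
  set R : Subgroup G → Subgroup G → Prop := fun C D =>
    D ≤ C ∧ ∃ y, y ∈ C ⊓ Z ∧ y ∉ D with hR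
  have hbase : P ⊤ := by
    refine ⟨by rw [Subgroup.coe_top]; exact isOpen_univ, top_sup_eq Z, ?_⟩
    rw [top_inf_eq, Subgroup.relIndex_self]
    exact one_ne_zero
  have hstep : ∀ C, P C → ∃ D, P D ∧ R C D := by
    intro C hPC
    obtain ⟨hCopen, hCsup, hCrel⟩ := hPC
    obtain ⟨z, hzCZ, hzphi⟩ := SetLike.not_le_iff_exists.1 (hΦ C hCopen hCrel)
    have hzC : z ∈ C := (Subgroup.mem_inf.1 hzCZ).1
    obtain ⟨D, hDC, hDopen, hzD, hrel⟩ := stepAux C hCopen hzC hzphi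
    have hpne : p ≠ 0 := hp.out.ne_zero
    -- C ≤ D ⊔ (C ⊓ Z)
    have hDE : D ≤ D ⊔ (C ⊓ Z) := le_sup_left
    have hEC' : D ⊔ (C ⊓ Z) ≤ C := sup_le hDC inf_le_left
    have hmul : D.relIndex (D ⊔ (C ⊓ Z)) * (D ⊔ (C ⊓ Z)).relIndex C = p := by
      rw [Subgroup.relIndex_mul_relIndex _ _ _ hDE hEC', hrel]
    have hnot1 : D.relIndex (D ⊔ (C ⊓ Z)) ≠ 1 := by
      intro h1
      rw [Subgroup.relIndex_eq_one] at h1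
      exact hzD (h1 (Subgroup.mem_sup_right hzCZ))
    have hE1 : (D ⊔ (C ⊓ Z)).relIndex C = 1 := by
      rcases (Nat.Prime.eq_one_or_self_of_dvd hp.out _ ⟨_, hmul.symm⟩) with h | h
      · exact absurd h hnot1
      · have := hmul
        rw [h] at this
        have hq : (D ⊔ (C ⊓ Z)).relIndex C * p = 1 * p := by
          rw [one_mul]
          calc (D ⊔ (C ⊓ Z)).relIndex C * p = p * (D ⊔ (C ⊓ Z)).relIndex C := mul_comm _ _
            _ = p := this
        exact Nat.eq_of_mul_eq_mul_right (Nat.pos_of_ne_zero hpne) hq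
    have hCE : C ≤ D ⊔ (C ⊓ Z) := Subgroup.relIndex_eq_one.1 hE1
    have hPD : P D := by
      refine ⟨hDopen, ?_, ?_⟩
      · -- D ⊔ Z = ⊤
        apply top_le_iff.1
        calc (⊤ : Subgroup G) = C ⊔ Z := hCsup.symm
          _ ≤ (D ⊔ (C ⊓ Z)) ⊔ Z := sup_le_sup_right hCE Z
          _ = D ⊔ ((C ⊓ Z) ⊔ Z) := sup_assoc _ _ _
          _ = D ⊔ Z := by rw [sup_eq_right.2 (inf_le_right : C ⊓ Z ≤ Z)]
      · -- relindex nonzero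
        have hDZ : D ⊓ Z = D ⊓ (C ⊓ Z) := by
          rw [← inf_assoc, inf_eq_left.2 hDC]
        have h1 : (D ⊓ Z).relIndex (C ⊓ Z) ≠ 0 := by
          rw [hDZ, Subgroup.inf_relIndex_right]
          apply Subgroup.relIndex_ne_zero_trans (K := C)
          · rw [hrel]; exact hpne
          · rw [Subgroup.relIndex_eq_one.2 (inf_le_left : C ⊓ Z ≤ C)]
            exact one_ne_zero
        have h2 : (D ⊓ Z) ≤ C ⊓ Z := inf_le_inf_right Z hDC
        rw [← Subgroup.relIndex_mul_relIndex (H := D ⊓ Z) (K := C ⊓ Z) (L := Z) h2 inf_le_right]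
        exact mul_ne_zero h1 hCrel
    exact ⟨D, hPD, hDC, z, hzCZ, hzD⟩
  obtain ⟨fC, _hf0, hfP, hfR⟩ := existsSeqAux P R ⊤ hbase hstep
  have hfClosed : ∀ n, IsClosed (fC n : Set G) := fun n =>
    (fC n).isClosed_of_isOpen (hfP n).1
  refine ⟨⨅ n, fC n, ?_, ?_, ?_⟩
  · rw [Subgroup.coe_iInf]
    exact isClosed_iInter fun n => hfClosed n
  · -- trivial intersection with Z
    rw [eq_bot_iff]
    intro x hx
    rw [Subgroup.mem_inf, Subgroup.mem_iInf] at hx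
    rw [Subgroup.mem_bot]
    obtain ⟨hxH, hxZ⟩ := hx
    -- transfer to ℤ_[p]
    haveI : CompactSpace Z := isCompact_iff_compactSpace.1 hZcl.isCompact
    set W : ℕ → Subgroup G := fun m => fC m ⊓ Z with hW
    set Am : ℕ → AddSubgroup ℤ_[p] := fun m =>
      Subgroup.toAddSubgroup' (Subgroup.map e.toMonoidHom ((W m).subgroupOf Z)) with hAm
    have hmemAm : ∀ m (y : ℤ_[p]), y ∈ Am m ↔
        ∃ w : Z, w ∈ (W m).subgroupOf Z ∧ e w = Multiplicative.ofAdd y := by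
      intro m y
      constructor
      · intro hy
        obtain ⟨w, hw, hw2⟩ := hy
        exact ⟨w, hw, hw2⟩
      · rintro ⟨w, hw, hw2⟩
        exact ⟨w, hw, hw2⟩
    have hclAm : ∀ m, IsClosed (Am m : Set ℤ_[p]) := by
      intro m
      have hset : (Am m : Set ℤ_[p]) =
          (fun w : Z => Multiplicative.toAdd (e w)) '' ((W m).subgroupOf Z : Set Z) := by
        ext y
        simp only [Set.mem_image, SetLike.mem_coe]
        rw [hmemAm]
        constructor
        · rintro ⟨w, hw, hw2⟩
          exact ⟨w, hw, by rw [hw2]; rfl⟩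
        · rintro ⟨w, hw, hw2⟩
          exact ⟨w, hw, by rw [← hw2]; rfl⟩
      rw [hset]
      have hclW : IsClosed ((W m).subgroupOf Z : Set Z) := by
        have : ((W m).subgroupOf Z : Set Z) = (Subtype.val : Z → G) ⁻¹' (W m : Set G) := by
          ext w
          simp [Subgroup.mem_subgroupOf]
        rw [this]
        exact ((hfClosed m).inter hZcl).preimage continuous_subtype_val
      have hcont : Continuous (fun w : Z => Multiplicative.toAdd (e w)) := he
      exact ((hclW.isCompact).image hcont).isClosed
    have hdecAm : ∀ m, Am (m + 1) ≤ Am m := by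
      intro m y hy
      rw [hmemAm] at hy ⊢
      obtain ⟨w, hw, hw2⟩ := hy
      refine ⟨w, ?_, hw2⟩
      rw [Subgroup.mem_subgroupOf] at hw ⊢
      rw [Subgroup.mem_inf] at hw ⊢
      exact ⟨(hfR m).1 hw.1, hw.2⟩
    have hstrAm : ∀ m, ∃ y, y ∈ Am m ∧ y ∉ Am (m + 1) := by
      intro m
      obtain ⟨y, hyCZ, hyD⟩ := (hfR m).2
      have hyZ : y ∈ Z := (Subgroup.mem_inf.1 hyCZ).2
      refine ⟨Multiplicative.toAdd (e ⟨y, hyZ⟩), ?_, ?_⟩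
      · rw [hmemAm]
        exact ⟨⟨y, hyZ⟩, by rwa [Subgroup.mem_subgroupOf], rfl⟩
      · intro hmem
        rw [hmemAm] at hmem
        obtain ⟨w, hw, hw2⟩ := hmem
        have hwe : w = ⟨y, hyZ⟩ := e.injective (by rw [hw2]; rfl)
        rw [hwe, Subgroup.mem_subgroupOf, Subgroup.mem_inf] at hw
        exact hyD hw.1
    have hxAm : ∀ m, Multiplicative.toAdd (e ⟨x, hxZ⟩) ∈ Am m := by
      intro m
      rw [hmemAm]
      refine ⟨⟨x, hxZ⟩, ?_, rfl⟩
      rw [Subgroup.mem_subgroupOf, Subgroup.mem_inf]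
      exact ⟨hxH m, hxZ⟩
    have hzero := padicChainAux Am hclAm hdecAm hstrAm hxAm
    have he1 : e ⟨x, hxZ⟩ = 1 := by
      have : Multiplicative.ofAdd (Multiplicative.toAdd (e ⟨x, hxZ⟩)) =
          Multiplicative.ofAdd 0 := by rw [hzero]
      simpa using this
    have hx1 : (⟨x, hxZ⟩ : Z) = 1 := e.injective (by rw [he1, map_one])
    exact congrArg Subtype.val hx1
  · -- surjectivity
    intro g
    set T : ℕ → Set G := fun n => (fC n : Set G) ∩ {x : G | x⁻¹ * g ∈ Z} with hT
    have hTne : ∀ n, (T n).Nonempty := by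
      intro n
      have hg : g ∈ ((fC n ⊔ Z : Subgroup G) : Set G) := by
        rw [(hfP n).2.1]
        trivial
      rw [Subgroup.mul_normal] at hg
      obtain ⟨c, hc, z0, hz0, rfl⟩ := hg
      exact ⟨c, hc, by simpa using hz0⟩
    have hTclosed : ∀ n, IsClosed (T n) := by
      intro n
      apply (hfClosed n).inter
      exact hZcl.preimage ((continuous_id.inv).mul continuous_const)
    have hTsub : ∀ n, T (n + 1) ⊆ T n := by
      intro n
      apply Set.inter_subset_inter_left
      exact SetLike.coe_subset_coe.2 (hfR n).1
    obtain ⟨c, hc⟩ := IsCompact.nonempty_iInter_of_sequence_nonempty_isCompact_isClosed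
      T hTsub hTne ((hTclosed 0).isCompact) hTclosed
    have hc' : ∀ n, c ∈ T n := fun n => Set.mem_iInter.1 hc n
    refine ⟨c, Subgroup.mem_iInf.2 (fun n => (hc' n).1), c⁻¹ * g, (hc' 0).2, ?_⟩
    rw [mul_inv_cancel_left]
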